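/- For integers N_T ≥ 1 and real α ≥ 0, define d(α, M) = αM/(M−1) for M ≥ 2 and 0 ≤ α ≤ M−1, and d(α, M) = M if α > M−1 (with d(α,1) = 1 for all α ≥ 0). Then max_{1 ≤ M ≤ N_T} d(α, M) equals: N_T if α > N_T − 1; ⌊α⌋ + 1 if α ≤ N_T − 1 and {α}(⌊α⌋ + 2) ≤ 1; and α(⌊α⌋+2)/(⌊α⌋+1) if α ≤ N_T − 1 and {α}(⌊α⌋+2) > 1. -/

import Mathlib

open Finset

/-- Theorem 4.1 (RBF-MF/AS part): the maximum single-cell DoF over the number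
of transmit beams M ∈ {1,…,N_T}. -/
theorem stmt_15 (NT : ℕ) (hNT : 1 ≤ NT) (α : ℝ) (hα : 0 ≤ α)
    (d : ℝ → ℕ → ℝ)
    (hd : ∀ (a : ℝ) (M : ℕ), d a M =
      if 2 ≤ M ∧ a ≤ (M : ℝ) - 1 then a * M / ((M : ℝ) - 1) else M) :
    (Finset.Icc 1 NT).sup' (Finset.nonempty_Icc.2 hNT) (fun M => d α M) =
      if (NT : ℝ) - 1 < α then (NT : ℝ)
      else if Int.fract α * ((⌊α⌋₊ : ℝ) + 2) ≤ 1 then (⌊α⌋₊ : ℝ) + 1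
      else α * ((⌊α⌋₊ : ℝ) + 2) / ((⌊α⌋₊ : ℝ) + 1) := by
  set k := ⌊α⌋₊ with hk
  have hkle : (k : ℝ) ≤ α := Nat.floor_le hα
  have hklt : α < (k : ℝ) + 1 := Nat.lt_floor_add_one α
  have hf : Int.fract α = α - (k : ℝ) := by
    rw [← Int.self_sub_floor, ← natCast_floor_eq_intCast_floor hα]
  rw [hf]
  apply le_antisymm
  · apply Finset.sup'_le
    intro M hM
    simp only [Finset.mem_Icc] at hM
    have hMNT : (M : ℝ) ≤ NT := by exact_mod_cast hM.2
    rw [hd]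
    split_ifs with hc h1 h2 h1b h2b
    · -- cond true, α > NT - 1 : contradiction
      exfalso; linarith [hc.2]
    · -- cond true, fract small : show ≤ k + 1
      obtain ⟨hM2, hαM⟩ := hc
      have hM2' : (2 : ℝ) ≤ M := by exact_mod_cast hM2
      have hMpos : (0 : ℝ) < (M : ℝ) - 1 := by linarith
      rw [div_le_iff₀ hMpos]
      rcases eq_or_lt_of_le hkle with heq | hlt
      · nlinarith
      · -- α > k, so M ≥ k + 2
        have hkM : k + 1 < M := by
          have : (k : ℝ) + 1 < (M : ℝ) := by linarith
          exact_mod_cast this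
        have hkM' : (k : ℝ) + 2 ≤ (M : ℝ) := by
          have : k + 2 ≤ M := hkM
          exact_mod_cast this
        nlinarith [mul_nonneg (by linarith : (0:ℝ) ≤ 1 - (α - k))
          (by linarith : (0:ℝ) ≤ (M : ℝ) - ((k : ℝ) + 2))]
    · -- cond true, fract big : show ≤ α(k+2)/(k+1)
      obtain ⟨hM2, hαM⟩ := hc
      have hM2' : (2 : ℝ) ≤ M := by exact_mod_cast hM2
      have hMpos : (0 : ℝ) < (M : ℝ) - 1 := by linarith
      have hkpos : (0 : ℝ) < (k : ℝ) + 1 := by positivity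
      have hlt : (k : ℝ) < α := by nlinarith [not_le.1 h2]
      have hkM : k + 1 < M := by
        have : (k : ℝ) + 1 < (M : ℝ) := by linarith
        exact_mod_cast this
      have hkM' : (k : ℝ) + 2 ≤ (M : ℝ) := by
        have : k + 2 ≤ M := hkM
        exact_mod_cast this
      rw [div_le_div_iff₀ hMpos hkpos]
      nlinarith [mul_nonneg hα (by linarith : (0:ℝ) ≤ (M : ℝ) - ((k : ℝ) + 2))]
    · -- cond false, α > NT - 1
      exact hMNT
    · -- cond false, fract small : M ≤ k + 1
      have h2 := h2b
      rcases Nat.lt_or_ge M 2 with hM1 | hM2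
      · have : (M : ℝ) ≤ 1 := by exact_mod_cast Nat.lt_succ_iff.1 hM1
        linarith
      · have hαM : (M : ℝ) - 1 < α := by
          by_contra h
          exact hc ⟨hM2, by linarith⟩
        have : M < k + 2 := by
          have : (M : ℝ) < (k : ℝ) + 2 := by linarith
          exact_mod_cast this
        have : (M : ℝ) ≤ (k : ℝ) + 1 := by exact_mod_cast Nat.lt_succ_iff.1 this
        linarith
    · -- cond false, fract big : M ≤ k + 1 ≤ α(k+2)/(k+1)
      have hkpos : (0 : ℝ) < (k : ℝ) + 1 := by positivity
      have h2 := h2b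
      have hMk : (M : ℝ) ≤ (k : ℝ) + 1 := by
        rcases Nat.lt_or_ge M 2 with hM1 | hM2
        · have : (M : ℝ) ≤ 1 := by exact_mod_cast Nat.lt_succ_iff.1 hM1
          linarith
        · have hαM : (M : ℝ) - 1 < α := by
            by_contra h
            exact hc ⟨hM2, by linarith⟩
          have : M < k + 2 := by
            have : (M : ℝ) < (k : ℝ) + 2 := by linarith
            exact_mod_cast this
          exact_mod_cast Nat.lt_succ_iff.1 this
      have : (k : ℝ) + 1 ≤ α * ((k : ℝ) + 2) / ((k : ℝ) + 1) := by
        rw [le_div_iff₀ hkpos]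
        nlinarith [not_le.1 h2]
      linarith
  · split_ifs with h1 h2
    · -- attained at M = NT
      refine le_trans ?_ (Finset.le_sup' (fun M => d α M) (Finset.mem_Icc.2 ⟨hNT, le_refl NT⟩))
      rw [hd]
      rw [if_neg]
      rintro ⟨hN2, hαN⟩
      have : (NT : ℝ) ≤ NT := le_refl _
      linarith
    · -- attained at M = k + 1
      have hmem : k + 1 ∈ Finset.Icc 1 NT := by
        refine Finset.mem_Icc.2 ⟨Nat.le_add_left 1 k, ?_⟩
        have : (k : ℝ) + 1 ≤ (NT : ℝ) := by linarith [not_lt.1 h1]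
        exact_mod_cast this
      refine le_trans ?_ (Finset.le_sup' (fun M => d α M) hmem)
      rw [hd]
      split_ifs with hc
      · obtain ⟨hk2, hαk⟩ := hc
        have hαk' : α ≤ (k : ℝ) := by push_cast at hαk; linarith
        have hαeq : α = (k : ℝ) := le_antisymm hαk' hkle
        have hk1 : 1 ≤ k := by omega
        have hkne : (k : ℝ) ≠ 0 := by positivity
        rw [hαeq]
        push_cast
        field_simp
        simp [hkne]
      · exact le_of_eq (by push_cast; ring)
    · -- attained at M = k + 2
      have hlt : (k : ℝ) < α := by nlinarith [not_le.1 h2]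
      have hmem : k + 2 ∈ Finset.Icc 1 NT := by
        refine Finset.mem_Icc.2 ⟨by omega, ?_⟩
        have h1' : α ≤ (NT : ℝ) - 1 := not_lt.1 h1
        have : (k : ℝ) < (NT : ℝ) - 1 := lt_of_lt_of_le hlt h1'
        have : k + 1 < NT := by
          have : (k : ℝ) + 1 < (NT : ℝ) := by linarith
          exact_mod_cast this
        omega
      refine le_trans ?_ (Finset.le_sup' (fun M => d α M) hmem)
      rw [hd]
      rw [if_pos ⟨by omega, by push_cast; linarith⟩]
      exact le_of_eq (by push_cast; ring)
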